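/- (Lemma 1: first-order identifiability under linear independence.) Let m = 3. If θ ∈ Θ_{c_0} is such that the topic vectors θ_1,…,θ_K are linearly independent in ℝ^V, then 𝔡_{3,1}(θ) > 0 (equivalently, 𝔭(3;θ) = 1). -/

import Mathlib

open MeasureTheory Filter

noncomputable section

namespace TopicModel

/-- The probability simplex in `ℝ^K`. -/
def simplex (K : ℕ) : Set (Fin K → ℝ) := {h | (∀ k, 0 ≤ h k) ∧ ∑ k, h k = 1}

/-- The parameter set `Θ_{c₀}`: `K` topic vectors, each a probability vector on `[V]`
with all entries at least `c₀`. -/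
def Theta (c0 : ℝ) (V K : ℕ) : Set (Fin K → Fin V → ℝ) :=
  {θ | (∀ k ℓ, c0 ≤ θ k ℓ) ∧ ∀ k, ∑ ℓ, θ k ℓ = 1}

/-- `θ` is a tuple of probability vectors. -/
def IsParam {V K : ℕ} (θ : Fin K → Fin V → ℝ) : Prop :=
  (∀ k ℓ, 0 ≤ θ k ℓ) ∧ ∀ k, ∑ ℓ, θ k ℓ = 1

/-- Word probability `p_{θ,h}(v) = Σ_k h_k θ_k(v)`. -/
def pWord {V K : ℕ} (θ : Fin K → Fin V → ℝ) (h : Fin K → ℝ) (v : Fin V) : ℝ :=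
  ∑ k, h k * θ k v

/-- Document probability given mixing vector `h`: `p_{θ,h}(x) = Π_i p_{θ,h}(x_i)`. -/
def pDoc {V K : ℕ} (m : ℕ) (θ : Fin K → Fin V → ℝ) (h : Fin K → ℝ)
    (x : Fin m → Fin V) : ℝ :=
  ∏ i, pWord θ h (x i)

/-- Marginal document probability `p_{θ,m}(x) = ∫ p_{θ,h}(x) dν₀(h)`. -/
def pM {V K : ℕ} (ν0 : Measure (Fin K → ℝ)) (m : ℕ) (θ : Fin K → Fin V → ℝ)
    (x : Fin m → Fin V) : ℝ :=
  ∫ h, pDoc m θ h x ∂ν0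

/-- `ℓ¹`-norm of a `K × V` array: `‖δ‖₁ = Σ_k Σ_ℓ |δ_k(ℓ)|`. -/
def norm1 {V K : ℕ} (δ : Fin K → Fin V → ℝ) : ℝ := ∑ k, ∑ ℓ, |δ k ℓ|

/-- Wasserstein distance between parameters:
`d_W(θ,θ') = min_π Σ_k ‖θ_k − θ'_{π(k)}‖₁`. -/
def dW {V K : ℕ} (θ θ' : Fin K → Fin V → ℝ) : ℝ :=
  ⨅ π : Equiv.Perm (Fin K), ∑ k, ∑ ℓ, |θ k ℓ - θ' (π k) ℓ|

/-- `L¹` distance between the document pmfs of two parameters. -/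
def distL1 {V K : ℕ} (ν0 : Measure (Fin K → ℝ)) (m : ℕ)
    (θ θ' : Fin K → Fin V → ℝ) : ℝ :=
  ∑ x : Fin m → Fin V, |pM ν0 m θ x - pM ν0 m θ' x|

/-- The `p`-th order degeneracy criterion `𝔡_{m,p}(θ)`: the infimum over all
`δ` with `‖δ‖₁ = 1` and `Σ_ℓ δ_k(ℓ) = 0` for every `k`, of
`Σ_{x ∈ [V]^m} |∫ p_{θ,h}(x) Σ_{i₁<⋯<i_p} Π_t (δ_h(x_{i_t}) / p_{θ,h}(x_{i_t})) dν₀|`. -/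
def degen {V K : ℕ} (ν0 : Measure (Fin K → ℝ)) (m : ℕ) (θ : Fin K → Fin V → ℝ)
    (p : ℕ) : ℝ :=
  sInf {r : ℝ | ∃ δ : Fin K → Fin V → ℝ, norm1 δ = 1 ∧ (∀ k, ∑ ℓ, δ k ℓ = 0) ∧
    r = ∑ x : Fin m → Fin V,
      |∫ h, pDoc m θ h x *
        ∑ S ∈ Finset.powersetCard p (Finset.univ : Finset (Fin m)),
          ∏ i ∈ S, ((∑ k, h k * δ k (x i)) / pWord θ h (x i)) ∂ν0|}

/-- The order of degeneracy `𝔭(m;θ) ∈ ℕ ∪ {∞}`: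
the least `p ∈ {1,…,m}` with `𝔡_{m,p}(θ) > 0`, or `∞` if none exists. -/
def pOrder {V K : ℕ} (ν0 : Measure (Fin K → ℝ)) (m : ℕ) (θ : Fin K → Fin V → ℝ) : ℕ∞ :=
  sInf ((↑) '' {p : ℕ | 1 ≤ p ∧ p ≤ m ∧ 0 < degen ν0 m θ p})

/-- Assumption (A2) on the mixing measure `ν₀`: a Borel probability measure supported on the
simplex, exchangeable, with `E[h₁²] > E[h₁h₂]` and (when `K ≥ 3`)
`E[h₁³] + 2E[h₁h₂h₃] > 3E[h₁²h₂]`. -/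
structure NiceMixing (K : ℕ) (ν0 : Measure (Fin K → ℝ)) : Prop where
  prob : IsProbabilityMeasure ν0
  support : ν0 (simplex K)ᶜ = 0
  exch : ∀ π : Equiv.Perm (Fin K), Measure.map (fun h => h ∘ π) ν0 = ν0
  mom2 : ∀ i j : Fin K, i ≠ j → ∫ h, h i * h j ∂ν0 < ∫ h, h i ^ 2 ∂ν0
  mom3 : ∀ i j k : Fin K, i ≠ j → j ≠ k → i ≠ k →
    3 * ∫ h, h i ^ 2 * h j ∂ν0 < ∫ h, h i ^ 3 ∂ν0 + 2 * ∫ h, h i * h j * h k ∂ν0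

/-- The equivalence class `Θ̃_{c₀}(θ)` of parameters inducing the same document pmf as `θ`. -/
def equivClass {V K : ℕ} (ν0 : Measure (Fin K → ℝ)) (m : ℕ) (c0 : ℝ)
    (θ : Fin K → Fin V → ℝ) : Set (Fin K → Fin V → ℝ) :=
  {θ' | θ' ∈ Theta c0 V K ∧ ∀ x : Fin m → Fin V, pM ν0 m θ' x = pM ν0 m θ x}

/-- Probability of the event `A` under `n` i.i.d. draws from the pmf `p` on a finite set. -/
def prodProb {α : Type*} [Fintype α] (p : α → ℝ) (n : ℕ) (A : Set (Fin n → α)) : ℝ :=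
  ∑ xs : Fin n → α, A.indicator (fun ys => ∏ i, p (ys i)) xs

end TopicModel

namespace TopicModel

/-! ### Auxiliary lemmas -/

lemma exists_perm_pair {K : ℕ} {i j i' j' : Fin K} (hij : i ≠ j) (h' : i' ≠ j') :
    ∃ π : Equiv.Perm (Fin K), π i = i' ∧ π j = j' := by
  classical
  set σ := Equiv.swap i i' with hσ
  have hσi : σ i = i' := Equiv.swap_apply_left i i'
  by_cases hb : σ j = j'
  · exact ⟨σ, hσi, hb⟩
  · have hne : i' ≠ σ j := by
      rw [← hσi]; exact fun hc => hij (σ.injective hc)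
    refine ⟨σ.trans (Equiv.swap (σ j) j'), ?_, ?_⟩
    · simp only [Equiv.trans_apply, hσi]
      exact Equiv.swap_apply_of_ne_of_ne hne h'
    · simp only [Equiv.trans_apply]
      exact Equiv.swap_apply_left _ _

lemma exists_perm_triple {K : ℕ} {i j k i' j' k' : Fin K} (h1 : i ≠ j) (h2 : i ≠ k)
    (h3 : j ≠ k) (h1' : i' ≠ j') (h2' : i' ≠ k') (h3' : j' ≠ k') :
    ∃ π : Equiv.Perm (Fin K), π i = i' ∧ π j = j' ∧ π k = k' := by
  classical
  obtain ⟨σ, hσ1, hσ2⟩ := exists_perm_pair h1 h1'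
  by_cases hb : σ k = k'
  · exact ⟨σ, hσ1, hσ2, hb⟩
  · have hki : σ k ≠ i' := by rw [← hσ1]; exact fun hc => h2.symm (σ.injective hc)
    have hkj : σ k ≠ j' := by rw [← hσ2]; exact fun hc => h3.symm (σ.injective hc)
    refine ⟨σ.trans (Equiv.swap (σ k) k'), ?_, ?_, ?_⟩
    · simp only [Equiv.trans_apply, hσ1]
      exact Equiv.swap_apply_of_ne_of_ne hki.symm h2'
    · simp only [Equiv.trans_apply, hσ2]
      exact Equiv.swap_apply_of_ne_of_ne hkj.symm h3'
    · simp only [Equiv.trans_apply]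
      exact Equiv.swap_apply_left _ _

lemma sum_comm3 {α : Type*} [AddCommMonoid α] {V K : ℕ}
    (f : Fin K → Fin K → Fin K → Fin V → α) :
    ∑ v, ∑ k, ∑ l, ∑ j, f k l j v = ∑ k, ∑ l, ∑ j, ∑ v, f k l j v := by
  rw [Finset.sum_comm]
  exact Finset.sum_congr rfl fun k _ => by
    rw [Finset.sum_comm]
    exact Finset.sum_congr rfl fun l _ => by rw [Finset.sum_comm]

lemma contract_aux {V K : ℕ} (w : Fin V → ℝ) (f : Fin K → Fin K → Fin K → Fin V → ℝ)
    (h0 : ∀ v, ∑ k, ∑ l, ∑ j, f k l j v = 0) :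
    ∑ k, ∑ l, ∑ j, ∑ v, w v * f k l j v = 0 := by
  rw [← sum_comm3 (fun k l j v => w v * f k l j v)]
  simp only [← Finset.mul_sum]
  simp [h0]

lemma sum_w_gen {V : ℕ} (w a b c : Fin V → ℝ) (x y z : ℝ) :
    ∑ v, w v * (x * a v + y * b v + z * c v)
      = x * (∑ v, w v * a v) + y * (∑ v, w v * b v) + z * (∑ v, w v * c v) := by
  simp only [Finset.mul_sum]
  rw [← Finset.sum_add_distrib, ← Finset.sum_add_distrib]
  exact Finset.sum_congr rfl fun v _ => by ring

lemma contract3 {V K : ℕ} (θ δ : Fin K → Fin V → ℝ) (mm : Fin K → Fin K → Fin K → ℝ)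
    (hT : ∀ v1 v2 v3 : Fin V, ∑ k, ∑ l, ∑ j, mm k l j *
        (δ k v1 * θ l v2 * θ j v3 + θ k v1 * δ l v2 * θ j v3 + θ k v1 * θ l v2 * δ j v3) = 0)
    (w1 w2 w3 : Fin V → ℝ) :
    ∑ k, ∑ l, ∑ j, mm k l j *
        ((∑ v, w1 v * δ k v) * (∑ v, w2 v * θ l v) * (∑ v, w3 v * θ j v)
       + (∑ v, w1 v * θ k v) * (∑ v, w2 v * δ l v) * (∑ v, w3 v * θ j v)
       + (∑ v, w1 v * θ k v) * (∑ v, w2 v * θ l v) * (∑ v, w3 v * δ j v)) = 0 := by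
  have h2 : ∀ v1 v2, ∑ k, ∑ l, ∑ j, mm k l j *
      (δ k v1 * θ l v2 * (∑ v, w3 v * θ j v) + θ k v1 * δ l v2 * (∑ v, w3 v * θ j v)
       + θ k v1 * θ l v2 * (∑ v, w3 v * δ j v)) = 0 := by
    intro v1 v2
    have hca := contract_aux w3 (fun k l j v => mm k l j *
        (δ k v1 * θ l v2 * θ j v + θ k v1 * δ l v2 * θ j v + θ k v1 * θ l v2 * δ j v))
        (fun v => hT v1 v2 v)
    rw [← hca]
    refine Finset.sum_congr rfl fun k _ => Finset.sum_congr rfl fun l _ =>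
      Finset.sum_congr rfl fun j _ => ?_
    rw [show mm k l j * (δ k v1 * θ l v2 * (∑ v, w3 v * θ j v)
          + θ k v1 * δ l v2 * (∑ v, w3 v * θ j v) + θ k v1 * θ l v2 * (∑ v, w3 v * δ j v))
        = (mm k l j * (δ k v1 * θ l v2)) * (∑ v, w3 v * θ j v)
        + (mm k l j * (θ k v1 * δ l v2)) * (∑ v, w3 v * θ j v)
        + (mm k l j * (θ k v1 * θ l v2)) * (∑ v, w3 v * δ j v) from by ring,
       ← sum_w_gen]
    exact Finset.sum_congr rfl fun v _ => by ring
  have h1 : ∀ v1, ∑ k, ∑ l, ∑ j, mm k l j *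
      (δ k v1 * (∑ v, w2 v * θ l v) * (∑ v, w3 v * θ j v)
       + θ k v1 * (∑ v, w2 v * δ l v) * (∑ v, w3 v * θ j v)
       + θ k v1 * (∑ v, w2 v * θ l v) * (∑ v, w3 v * δ j v)) = 0 := by
    intro v1
    have hca := contract_aux w2 (fun k l j v => mm k l j *
        (δ k v1 * θ l v * (∑ v', w3 v' * θ j v') + θ k v1 * δ l v * (∑ v', w3 v' * θ j v')
         + θ k v1 * θ l v * (∑ v', w3 v' * δ j v')))
        (fun v => h2 v1 v)
    rw [← hca]
    refine Finset.sum_congr rfl fun k _ => Finset.sum_congr rfl fun l _ =>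
      Finset.sum_congr rfl fun j _ => ?_
    rw [show mm k l j * (δ k v1 * (∑ v, w2 v * θ l v) * (∑ v, w3 v * θ j v)
          + θ k v1 * (∑ v, w2 v * δ l v) * (∑ v, w3 v * θ j v)
          + θ k v1 * (∑ v, w2 v * θ l v) * (∑ v, w3 v * δ j v))
        = (mm k l j * (δ k v1 * (∑ v, w3 v * θ j v))) * (∑ v, w2 v * θ l v)
        + (mm k l j * (θ k v1 * (∑ v, w3 v * θ j v))) * (∑ v, w2 v * δ l v)
        + (mm k l j * (θ k v1 * (∑ v, w3 v * δ j v))) * (∑ v, w2 v * θ l v) from by ring,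
       ← sum_w_gen]
    exact Finset.sum_congr rfl fun v _ => by ring
  have hca := contract_aux w1 (fun k l j v => mm k l j *
      (δ k v * (∑ v', w2 v' * θ l v') * (∑ v', w3 v' * θ j v')
       + θ k v * (∑ v', w2 v' * δ l v') * (∑ v', w3 v' * θ j v')
       + θ k v * (∑ v', w2 v' * θ l v') * (∑ v', w3 v' * δ j v'))) h1
  rw [← hca]
  refine Finset.sum_congr rfl fun k _ => Finset.sum_congr rfl fun l _ =>
    Finset.sum_congr rfl fun j _ => ?_
  rw [show mm k l j * ((∑ v, w1 v * δ k v) * (∑ v, w2 v * θ l v) * (∑ v, w3 v * θ j v)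
        + (∑ v, w1 v * θ k v) * (∑ v, w2 v * δ l v) * (∑ v, w3 v * θ j v)
        + (∑ v, w1 v * θ k v) * (∑ v, w2 v * θ l v) * (∑ v, w3 v * δ j v))
      = (mm k l j * ((∑ v, w2 v * θ l v) * (∑ v, w3 v * θ j v))) * (∑ v, w1 v * δ k v)
      + (mm k l j * ((∑ v, w2 v * δ l v) * (∑ v, w3 v * θ j v))) * (∑ v, w1 v * θ k v)
      + (mm k l j * ((∑ v, w2 v * θ l v) * (∑ v, w3 v * δ j v))) * (∑ v, w1 v * θ k v) from by ring,
     ← sum_w_gen]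
  exact Finset.sum_congr rfl fun v _ => by ring

lemma core_alg {V K : ℕ} (hK : 2 ≤ K)
    (θ δ : Fin K → Fin V → ℝ)
    (hli : LinearIndependent ℝ θ)
    (hθsum : ∀ k, ∑ v, θ k v = 1)
    (hrow : ∀ k, ∑ v, δ k v = 0)
    (mm : Fin K → Fin K → Fin K → ℝ)
    (hT : ∀ v1 v2 v3 : Fin V, ∑ k, ∑ l, ∑ j, mm k l j *
        (δ k v1 * θ l v2 * θ j v3 + θ k v1 * δ l v2 * θ j v3 + θ k v1 * θ l v2 * δ j v3) = 0)
    (a b : ℝ) (hb0 : 0 ≤ b) (hba : b < a)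
    (hcc : ∀ k l, ∑ j, mm k l j = if k = l then a else b)
    (h3 : 3 ≤ K → ∃ a3 b3 c3 : ℝ, 3 * b3 < a3 + 2 * c3 ∧
        (∀ p, mm p p p = a3) ∧ (∀ p s, p ≠ s → mm p p s = b3) ∧
        (∀ p s, p ≠ s → mm s p s = b3) ∧ (∀ p s, p ≠ s → mm p s s = b3) ∧
        (∀ k l j, k ≠ l → l ≠ j → k ≠ j → mm k l j = c3)) :
    ∀ k v, δ k v = 0 := by
  classical
  -- dual functionals
  let f : (Fin K → ℝ) →ₗ[ℝ] (Fin V → ℝ) :=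
    { toFun := fun c => ∑ k, c k • θ k
      map_add' := fun c d => by
        simp [add_smul, Finset.sum_add_distrib]
      map_smul' := fun r c => by
        simp [Finset.smul_sum, smul_smul] }
  have hfapp : ∀ c, f c = ∑ k, c k • θ k := fun c => rfl
  have hker : LinearMap.ker f = ⊥ := by
    rw [LinearMap.ker_eq_bot']
    intro c hc
    rw [hfapp] at hc
    funext k
    exact (Fintype.linearIndependent_iff.mp hli) c hc k
  obtain ⟨g, hg⟩ := f.exists_leftInverse_of_injective hker
  have hgθ : ∀ k, g (θ k) = Pi.single k 1 := by
    intro k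
    have h1 : f (Pi.single k (1:ℝ)) = θ k := by
      rw [hfapp]
      simp [Pi.single_apply, ite_smul]
    rw [← h1, ← LinearMap.comp_apply, hg, LinearMap.id_apply]
  set w : Fin K → Fin V → ℝ := fun p v => g (fun j => if v = j then 1 else 0) p with hw
  have hrep : ∀ (u : Fin V → ℝ) p, ∑ v, w p v * u v = g u p := by
    intro u p
    conv_rhs => rw [pi_eq_sum_univ u]
    rw [_root_.map_sum, Finset.sum_apply]
    exact Finset.sum_congr rfl fun v _ => by
      rw [LinearMap.map_smul]; simp [hw, mul_comm]
  have hwθ : ∀ p k, ∑ v, w p v * θ k v = if k = p then 1 else 0 := by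
    intro p k
    rw [hrep, hgθ]
    simp [Pi.single_apply, eq_comm]
  set cM : Fin K → Fin K → ℝ := fun k p => ∑ v, w p v * δ k v with hcM
  have hwδ : ∀ p k, ∑ v, w p v * δ k v = cM k p := fun p k => rfl
  set ones : Fin V → ℝ := fun _ => (1:ℝ) with hones
  have hoθ : ∀ k, ∑ v, ones v * θ k v = 1 := by
    intro k; simp [hones, hθsum k]
  have hoδ : ∀ k, ∑ v, ones v * δ k v = 0 := by
    intro k; simp [hones, hrow k]
  set ev : Fin V → Fin V → ℝ := fun v0 v => if v = v0 then 1 else 0 with hev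
  have heθ : ∀ v0 k, ∑ v, ev v0 v * θ k v = θ k v0 := by
    intro v0 k; simp [hev, ite_mul, Finset.sum_ite_eq']
  have heδ : ∀ v0 k, ∑ v, ev v0 v * δ k v = δ k v0 := by
    intro v0 k; simp [hev, ite_mul, Finset.sum_ite_eq']
  -- basic sum helpers
  have he0 : ∀ k : Fin K, ∑ l : Fin K, (if k = l then a else b) = (a - b) + K * b := by
    intro k
    have hpt : ∀ l, (if k = l then a else b) = b + (if l = k then (a - b) else 0) := by
      intro l
      by_cases hkl : l = k
      · subst hkl; simp
      · simp [hkl, Ne.symm hkl]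
    rw [Finset.sum_congr rfl fun l _ => hpt l, Finset.sum_add_distrib, Finset.sum_const,
      Finset.sum_ite_eq']
    simp [Finset.card_univ, mul_comm]
    ring
  have helper1 : ∀ (c : Fin K → ℝ) (p : Fin K),
      ∑ k : Fin K, (if k = p then a else b) * c k = b * (∑ k, c k) + (a - b) * c p := by
    intro c p
    have hpt : ∀ k, (if k = p then a else b) * c k
        = b * c k + (if k = p then (a - b) * c k else 0) := by
      intro k; split_ifs <;> ring
    rw [Finset.sum_congr rfl fun k _ => hpt k, Finset.sum_add_distrib, ← Finset.mul_sum,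
      Finset.sum_ite_eq']
    simp
  have helper1' : ∀ (c : Fin K → ℝ) (k : Fin K),
      ∑ l : Fin K, (if k = l then a else b) * c l = b * (∑ l, c l) + (a - b) * c k := by
    intro c k
    have hpt : ∀ l, (if k = l then a else b) * c l
        = b * c l + (if l = k then (a - b) * c l else 0) := by
      intro l
      by_cases hkl : l = k
      · subst hkl; simp; ring
      · simp [hkl, Ne.symm hkl]
    rw [Finset.sum_congr rfl fun l _ => hpt l, Finset.sum_add_distrib, ← Finset.mul_sum,
      Finset.sum_ite_eq']
    simp
  have he : 0 < (a - b) + K * b := by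
    have h1 : (0:ℝ) ≤ K * b := mul_nonneg (Nat.cast_nonneg K) hb0
    have h2 := sub_pos.mpr hba
    linarith
  have hene : ((a - b) + (K:ℝ) * b) ≠ 0 := ne_of_gt he
  -- collapse of j-sum
  have H1 : ∀ (c : Fin K → Fin K → ℝ),
      ∑ k, ∑ l, ∑ j, mm k l j * c k l = ∑ k, ∑ l, (if k = l then a else b) * c k l := by
    intro c
    refine Finset.sum_congr rfl fun k _ => Finset.sum_congr rfl fun l _ => ?_
    rw [← Finset.sum_mul, hcc]
  -- column sums of cM vanish
  have hcol : ∀ p, ∑ k, cM k p = 0 := by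
    intro p
    have I := contract3 θ δ mm hT (w p) ones ones
    simp only [hwδ, hwθ, hoθ, hoδ, mul_one, mul_zero, add_zero, zero_mul] at I
    rw [H1 (fun k l => cM k p)] at I
    have I2 : ∑ k, (∑ l : Fin K, (if k = l then a else b)) * cM k p = 0 := by
      rw [← I]
      exact Finset.sum_congr rfl fun k _ => by rw [Finset.sum_mul]
    rw [Finset.sum_congr rfl fun k (_ : k ∈ Finset.univ) => by rw [he0 k]] at I2
    rw [← Finset.mul_sum] at I2
    exact (mul_eq_zero.mp I2).resolve_left hene
  -- Δ = 0
  have hΔ : ∀ v, ∑ k, δ k v = 0 := by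
    intro v
    have I := contract3 θ δ mm hT (ev v) ones ones
    simp only [heδ, heθ, hoθ, hoδ, mul_one, mul_zero, add_zero, zero_mul] at I
    rw [H1 (fun k l => δ k v)] at I
    have I2 : ∑ k, (∑ l : Fin K, (if k = l then a else b)) * δ k v = 0 := by
      rw [← I]
      exact Finset.sum_congr rfl fun k _ => by rw [Finset.sum_mul]
    rw [Finset.sum_congr rfl fun k (_ : k ∈ Finset.univ) => by rw [he0 k]] at I2
    rw [← Finset.mul_sum] at I2
    exact (mul_eq_zero.mp I2).resolve_left hene
  -- span relation
  have hspan : ∀ p v, δ p v = -∑ k, cM k p * θ k v := by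
    intro p v
    have I := contract3 θ δ mm hT (ev v) (w p) ones
    simp only [heδ, heθ, hwθ, hwδ, hoθ, hoδ, mul_one, mul_zero, add_zero, zero_mul] at I
    rw [H1 (fun k l => δ k v * (if l = p then 1 else 0) + θ k v * cM l p)] at I
    simp only [mul_add, Finset.sum_add_distrib] at I
    have hA : ∑ k, ∑ l, (if k = l then a else b) * (δ k v * if l = p then 1 else 0)
        = (a - b) * δ p v := by
      have hin : ∀ k, ∑ l, (if k = l then a else b) * (δ k v * if l = p then 1 else 0)
          = (if k = p then a else b) * δ k v := by
        intro k
        have hpt : ∀ l, (if k = l then a else b) * (δ k v * if l = p then 1 else 0)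
            = if l = p then (if k = l then a else b) * δ k v else 0 := by
          intro l
          by_cases hlp : l = p <;> simp [hlp] <;> try ring
        rw [Finset.sum_congr rfl fun l _ => hpt l, Finset.sum_ite_eq']
        simp
      rw [Finset.sum_congr rfl fun k _ => hin k, helper1, hΔ v]
      ring
    have hB : ∑ k, ∑ l, (if k = l then a else b) * (θ k v * cM l p)
        = (a - b) * ∑ k, θ k v * cM k p := by
      have hin : ∀ k, ∑ l, (if k = l then a else b) * (θ k v * cM l p)
          = θ k v * ((a - b) * cM k p) := by
        intro k
        have hpt : ∀ l, (if k = l then a else b) * (θ k v * cM l p)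
            = θ k v * ((if k = l then a else b) * cM l p) := fun l => by ring
        rw [Finset.sum_congr rfl fun l _ => hpt l, ← Finset.mul_sum,
          helper1' (fun l => cM l p) k, hcol p]
        ring
      rw [Finset.sum_congr rfl fun k _ => hin k]
      rw [Finset.mul_sum]
      exact Finset.sum_congr rfl fun k _ => by ring
    rw [hA, hB] at I
    have hab : a - b ≠ 0 := ne_of_gt (sub_pos.mpr hba)
    have hz : (a - b) * (δ p v + ∑ k, θ k v * cM k p) = 0 := by rw [mul_add]; linarith
    have h0 := (mul_eq_zero.mp hz).resolve_left hab
    have hδv : δ p v = -∑ k, θ k v * cM k p := by linarith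
    rw [hδv, neg_inj]
    exact Finset.sum_congr rfl fun k _ => by ring
  -- antisymmetry and zero diagonal
  have hanti : ∀ p q, cM p q = -cM q p := by
    intro p q
    rw [← hwδ q p]
    calc ∑ v, w q v * δ p v = ∑ v, ∑ k, -(cM k p) * (w q v * θ k v) := by
          refine Finset.sum_congr rfl fun v _ => ?_
          rw [hspan p v, mul_neg, Finset.mul_sum, ← Finset.sum_neg_distrib]
          exact Finset.sum_congr rfl fun k _ => by ring
      _ = ∑ k, -(cM k p) * ∑ v, w q v * θ k v := by
          rw [Finset.sum_comm]
          exact Finset.sum_congr rfl fun k _ => (Finset.mul_sum _ _ _).symm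
      _ = -cM q p := by
          simp only [hwθ]
          simp [mul_ite, Finset.sum_ite_eq']
  have hdiag : ∀ p, cM p p = 0 := by
    intro p; have := hanti p p; linarith
  -- all entries of cM vanish
  have hcM0 : ∀ k p, cM k p = 0 := by
    by_cases hK3 : 3 ≤ K
    · obtain ⟨a3, b3, c3, hm3, hma, hmb, hmb', hmb'', hmc⟩ := h3 hK3
      have hoff : ∀ p s, p ≠ s → cM s p = 0 := by
        intro p s hps
        have I := contract3 θ δ mm hT (w p) (w p) (w s)
        simp only [hwδ, hwθ] at I
        simp only [mul_add, Finset.sum_add_distrib] at I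
        have hS1 : ∑ k, ∑ l, ∑ j, mm k l j *
            (cM k p * (if l = p then 1 else 0) * (if j = s then 1 else 0))
            = (b3 - c3) * cM s p := by
          have hj : ∀ k l, ∑ j, mm k l j *
              (cM k p * (if l = p then 1 else 0) * (if j = s then 1 else 0))
              = mm k l s * (cM k p * (if l = p then 1 else 0)) := by
            intro k l
            have hpt : ∀ j, mm k l j *
                (cM k p * (if l = p then 1 else 0) * (if j = s then 1 else 0))
                = if j = s then mm k l j * (cM k p * (if l = p then 1 else 0)) else 0 := by
              intro j
              by_cases hjs : j = s <;> simp [hjs] <;> try ring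
            rw [Finset.sum_congr rfl fun j _ => hpt j, Finset.sum_ite_eq']
            simp
          have hl : ∀ k, ∑ l, mm k l s * (cM k p * (if l = p then 1 else 0))
              = mm k p s * cM k p := by
            intro k
            have hpt : ∀ l, mm k l s * (cM k p * (if l = p then 1 else 0))
                = if l = p then mm k l s * cM k p else 0 := by
              intro l
              by_cases hlp : l = p <;> simp [hlp] <;> try ring
            rw [Finset.sum_congr rfl fun l _ => hpt l, Finset.sum_ite_eq']
            simp
          rw [Finset.sum_congr rfl fun k (_ : k ∈ Finset.univ) => by
            rw [Finset.sum_congr rfl fun l (_ : l ∈ Finset.univ) => hj k l, hl k]]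
          have hmval : ∀ k, mm k p s = if k = p then b3 else if k = s then b3 else c3 := by
            intro k
            by_cases hkp : k = p
            · subst hkp; rw [hmb k s hps]; simp
            · by_cases hks : k = s
              · subst hks; rw [hmb' p k hps]; simp [hkp]
              · rw [hmc k p s hkp hps hks]; simp [hkp, hks]
          rw [Finset.sum_congr rfl fun k (_ : k ∈ Finset.univ) => by rw [hmval k]]
          have hpt : ∀ k, (if k = p then b3 else if k = s then b3 else c3) * cM k p
              = c3 * cM k p + ((if k = p then (b3 - c3) * cM k p else 0)
                + (if k = s then (b3 - c3) * cM k p else 0)) := by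
            intro k
            by_cases hkp : k = p
            · subst hkp; simp [hps]; try ring
            · by_cases hks : k = s
              · subst hks; simp [hkp, Ne.symm hps]; try ring
              · simp [hkp, hks]
          rw [Finset.sum_congr rfl fun k _ => hpt k, Finset.sum_add_distrib,
            ← Finset.mul_sum, hcol p, Finset.sum_add_distrib, Finset.sum_ite_eq',
            Finset.sum_ite_eq']
          simp [hdiag p]
        have hS2 : ∑ k, ∑ l, ∑ j, mm k l j *
            ((if k = p then 1 else 0) * cM l p * (if j = s then 1 else 0))
            = (b3 - c3) * cM s p := by
          have hj : ∀ k l, ∑ j, mm k l j *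
              ((if k = p then 1 else 0) * cM l p * (if j = s then 1 else 0))
              = mm k l s * ((if k = p then 1 else 0) * cM l p) := by
            intro k l
            have hpt : ∀ j, mm k l j *
                ((if k = p then 1 else 0) * cM l p * (if j = s then 1 else 0))
                = if j = s then mm k l j * ((if k = p then 1 else 0) * cM l p) else 0 := by
              intro j
              by_cases hjs : j = s <;> simp [hjs] <;> try ring
            rw [Finset.sum_congr rfl fun j _ => hpt j, Finset.sum_ite_eq']
            simp
          have hk : ∀ k, ∑ l, mm k l s * ((if k = p then 1 else 0) * cM l p)
              = if k = p then ∑ l, mm k l s * cM l p else 0 := by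
            intro k
            by_cases hkp : k = p
            · simp only [hkp, if_true]
              exact Finset.sum_congr rfl fun l _ => by ring
            · simp [hkp]
          rw [Finset.sum_congr rfl fun k (_ : k ∈ Finset.univ) => by
            rw [Finset.sum_congr rfl fun l (_ : l ∈ Finset.univ) => hj k l, hk k],
            Finset.sum_ite_eq']
          simp only [Finset.mem_univ, if_true]
          have hmval : ∀ l, mm p l s = if l = p then b3 else if l = s then b3 else c3 := by
            intro l
            by_cases hlp : l = p
            · subst hlp; rw [hmb l s hps]; simp
            · by_cases hls : l = s
              · subst hls; rw [hmb'' p l hps]; simp [hlp]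
              · rw [hmc p l s (Ne.symm hlp) hls hps]; simp [hlp, hls]
          rw [Finset.sum_congr rfl fun l (_ : l ∈ Finset.univ) => by rw [hmval l]]
          have hpt : ∀ l, (if l = p then b3 else if l = s then b3 else c3) * cM l p
              = c3 * cM l p + ((if l = p then (b3 - c3) * cM l p else 0)
                + (if l = s then (b3 - c3) * cM l p else 0)) := by
            intro l
            by_cases hlp : l = p
            · subst hlp; simp [hps]; try ring
            · by_cases hls : l = s
              · subst hls; simp [hlp, Ne.symm hps]; try ring
              · simp [hlp, hls]
          rw [Finset.sum_congr rfl fun l _ => hpt l, Finset.sum_add_distrib,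
            ← Finset.mul_sum, hcol p, Finset.sum_add_distrib, Finset.sum_ite_eq',
            Finset.sum_ite_eq']
          simp [hdiag p]
        have hS3 : ∑ k, ∑ l, ∑ j, mm k l j *
            ((if k = p then 1 else 0) * (if l = p then 1 else 0) * cM j s)
            = (a3 - b3) * cM p s := by
          have hl : ∀ k, ∑ l, ∑ j, mm k l j *
              ((if k = p then 1 else 0) * (if l = p then 1 else 0) * cM j s)
              = if k = p then ∑ j, mm k p j * cM j s else 0 := by
            intro k
            have hpt : ∀ l, ∑ j, mm k l j *
                ((if k = p then 1 else 0) * (if l = p then 1 else 0) * cM j s)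
                = if l = p then ∑ j, mm k l j * ((if k = p then 1 else 0) * cM j s) else 0 := by
              intro l
              by_cases hlp : l = p
              · simp only [hlp, if_true]
                exact Finset.sum_congr rfl fun j _ => by ring
              · simp [hlp]
            rw [Finset.sum_congr rfl fun l _ => hpt l, Finset.sum_ite_eq']
            simp only [Finset.mem_univ, if_true]
            by_cases hkp : k = p
            · simp only [hkp, if_true]
              exact Finset.sum_congr rfl fun j _ => by ring
            · simp [hkp]
          rw [Finset.sum_congr rfl fun k (_ : k ∈ Finset.univ) => hl k, Finset.sum_ite_eq']
          simp only [Finset.mem_univ, if_true]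
          have hmval : ∀ j, mm p p j = if j = p then a3 else b3 := by
            intro j
            by_cases hjp : j = p
            · subst hjp; rw [hma j]; simp
            · rw [hmb p j (Ne.symm hjp)]; simp [hjp]
          rw [Finset.sum_congr rfl fun j (_ : j ∈ Finset.univ) => by rw [hmval j]]
          have hpt : ∀ j, (if j = p then a3 else b3) * cM j s
              = b3 * cM j s + (if j = p then (a3 - b3) * cM j s else 0) := by
            intro j; split_ifs <;> ring
          rw [Finset.sum_congr rfl fun j _ => hpt j, Finset.sum_add_distrib,
            ← Finset.mul_sum, hcol s, Finset.sum_ite_eq']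
          simp
        rw [hS1, hS2, hS3, hanti p s] at I
        have hfac : (3 * b3 - 2 * c3 - a3) * cM s p = 0 := by linear_combination I
        have hne : 3 * b3 - 2 * c3 - a3 ≠ 0 := by
          intro hcon; linarith
        exact (mul_eq_zero.mp hfac).resolve_left hne
      intro k p
      by_cases hkp : k = p
      · rw [hkp]; exact hdiag p
      · exact hoff p k (Ne.symm hkp)
    · have hK2 : K = 2 := by omega
      subst hK2
      have hvals : ∀ i : Fin 2, i = 0 ∨ i = 1 := by decide
      intro k p
      rcases eq_or_ne k p with h | h
      · rw [h]; exact hdiag p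
      · rcases hvals k with hk | hk <;> rcases hvals p with hp | hp
        · exact absurd (hk.trans hp.symm) h
        · subst hk; subst hp
          have h2 := hdiag 1; have h1 := hcol 1; rw [Fin.sum_univ_two] at h1; linarith
        · subst hk; subst hp
          have h2 := hdiag 0; have h1 := hcol 0; rw [Fin.sum_univ_two] at h1; linarith
        · exact absurd (hk.trans hp.symm) h
  intro k v
  rw [hspan k v]
  simp [hcM0]


variable {K : ℕ} {ν0 : MeasureTheory.Measure (Fin K → ℝ)}


lemma ae_simplex (hν0 : NiceMixing K ν0) :
    ∀ᵐ h ∂ν0, (∀ k, 0 ≤ h k) ∧ ∑ k, h k = 1 := by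
  rw [MeasureTheory.ae_iff]
  exact hν0.support

lemma integrable_mono3 (hν0 : NiceMixing K ν0) (k l j : Fin K) :
    Integrable (fun h => h k * h l * h j) ν0 := by
  haveI := hν0.prob
  refine Integrable.mono' (integrable_const (1:ℝ))
    (Continuous.aestronglyMeasurable (((continuous_apply k).mul
      (continuous_apply l)).mul (continuous_apply j))) ?_
  filter_upwards [ae_simplex hν0] with h hh
  obtain ⟨hpos, hsum⟩ := hh
  have hb : ∀ i, h i ≤ 1 := by
    intro i
    calc h i ≤ ∑ k, h k := Finset.single_le_sum (fun k _ => hpos k) (Finset.mem_univ i)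
    _ = 1 := hsum
  rw [Real.norm_eq_abs, abs_of_nonneg (mul_nonneg (mul_nonneg (hpos k) (hpos l)) (hpos j))]
  have hkl : h k * h l ≤ 1 := by nlinarith [hpos k, hpos l, hb k, hb l]
  nlinarith [mul_nonneg (hpos k) (hpos l), hb j, hpos j, hkl]

lemma integrable_mono2 (hν0 : NiceMixing K ν0) (k l : Fin K) :
    Integrable (fun h => h k * h l) ν0 := by
  haveI := hν0.prob
  refine Integrable.mono' (integrable_const (1:ℝ))
    (Continuous.aestronglyMeasurable ((continuous_apply k).mul (continuous_apply l))) ?_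
  filter_upwards [ae_simplex hν0] with h hh
  obtain ⟨hpos, hsum⟩ := hh
  have hb : ∀ i, h i ≤ 1 := by
    intro i
    calc h i ≤ ∑ k, h k := Finset.single_le_sum (fun k _ => hpos k) (Finset.mem_univ i)
    _ = 1 := hsum
  rw [Real.norm_eq_abs, abs_of_nonneg (mul_nonneg (hpos k) (hpos l))]
  nlinarith [hpos k, hpos l, hb k, hb l]

lemma exch_integral (hν0 : NiceMixing K ν0) (π : Equiv.Perm (Fin K))
    (F : (Fin K → ℝ) → ℝ) (hF : Continuous F) :
    ∫ h, F h ∂ν0 = ∫ h, F (fun i => h (π i)) ∂ν0 := by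
  conv_lhs => rw [← hν0.exch π]
  have hcont : Continuous (fun h : Fin K → ℝ => (h ∘ π : Fin K → ℝ)) :=
    continuous_pi fun i => continuous_apply (π i)
  rw [MeasureTheory.integral_map hcont.aemeasurable hF.aestronglyMeasurable]
  rfl

lemma mdef_perm (hν0 : NiceMixing K ν0) (π : Equiv.Perm (Fin K)) (k l j : Fin K) :
    ∫ h, h k * h l * h j ∂ν0 = ∫ h, h (π k) * h (π l) * h (π j) ∂ν0 := by
  exact exch_integral hν0 π (fun h => h k * h l * h j)
    (((continuous_apply k).mul (continuous_apply l)).mul (continuous_apply j))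

lemma m2_perm (hν0 : NiceMixing K ν0) (π : Equiv.Perm (Fin K)) (k l : Fin K) :
    ∫ h, h k * h l ∂ν0 = ∫ h, h (π k) * h (π l) ∂ν0 := by
  exact exch_integral hν0 π (fun h => h k * h l)
    ((continuous_apply k).mul (continuous_apply l))

lemma mdef_sum3 (hν0 : NiceMixing K ν0) (k l : Fin K) :
    ∑ j, ∫ h, h k * h l * h j ∂ν0 = ∫ h, h k * h l ∂ν0 := by
  rw [← integral_finset_sum _ (fun j _ => integrable_mono3 hν0 k l j)]
  refine integral_congr_ae ?_
  filter_upwards [ae_simplex hν0] with h hh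
  rw [← Finset.mul_sum, hh.2, mul_one]

lemma mdef_symm12 (k l j : Fin K) :
    ∫ h, h k * h l * h j ∂ν0 = ∫ h, h l * h k * h j ∂ν0 := by
  congr 1; funext h; ring

lemma mdef_symm23 (k l j : Fin K) :
    ∫ h, h k * h l * h j ∂ν0 = ∫ h, h k * h j * h l ∂ν0 := by
  congr 1; funext h; ring



lemma triple_prod_sum {K : ℕ} (A B C : Fin K → ℝ) :
    (∑ k, A k) * (∑ l, B l) * (∑ j, C j) = ∑ k, ∑ l, ∑ j, A k * B l * C j := by
  rw [Finset.sum_mul_sum, Finset.sum_mul]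
  refine Finset.sum_congr rfl fun k _ => ?_
  rw [Finset.sum_mul]
  refine Finset.sum_congr rfl fun l _ => ?_
  rw [Finset.mul_sum]

lemma key_integral {V : ℕ} {c0 : ℝ} (hc0 : 0 < c0) (hν0 : NiceMixing K ν0)
    (θ : Fin K → Fin V → ℝ) (hθlb : ∀ k v, c0 ≤ θ k v)
    (δ : Fin K → Fin V → ℝ) (x : Fin 3 → Fin V) :
    (∫ h, pDoc 3 θ h x * ∑ S ∈ Finset.powersetCard 1 (Finset.univ : Finset (Fin 3)),
        ∏ i ∈ S, ((∑ k, h k * δ k (x i)) / pWord θ h (x i)) ∂ν0)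
    = ∑ k, ∑ l, ∑ j, (∫ h, h k * h l * h j ∂ν0) *
        (δ k (x 0) * θ l (x 1) * θ j (x 2) + θ k (x 0) * δ l (x 1) * θ j (x 2)
          + θ k (x 0) * θ l (x 1) * δ j (x 2)) := by
  classical
  haveI := hν0.prob
  have hstep : (fun h => pDoc 3 θ h x *
      ∑ S ∈ Finset.powersetCard 1 (Finset.univ : Finset (Fin 3)),
        ∏ i ∈ S, ((∑ k, h k * δ k (x i)) / pWord θ h (x i)))
      =ᶠ[ae ν0] (fun h => ∑ k, ∑ l, ∑ j, (h k * h l * h j) *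
        (δ k (x 0) * θ l (x 1) * θ j (x 2) + θ k (x 0) * δ l (x 1) * θ j (x 2)
          + θ k (x 0) * θ l (x 1) * δ j (x 2))) := by
    filter_upwards [ae_simplex hν0] with h hh
    obtain ⟨hpos, hsum⟩ := hh
    have hp : ∀ v, 0 < pWord θ h v := by
      intro v
      have h1 : c0 ≤ pWord θ h v := by
        have h2 : ∀ k, h k * c0 ≤ h k * θ k v := fun k =>
          mul_le_mul_of_nonneg_left (hθlb k v) (hpos k)
        calc c0 = (∑ k, h k) * c0 := by rw [hsum, one_mul]
        _ = ∑ k, h k * c0 := by rw [Finset.sum_mul]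
        _ ≤ ∑ k, h k * θ k v := Finset.sum_le_sum fun k _ => h2 k
        _ = pWord θ h v := rfl
      linarith
    rw [Finset.powersetCard_one, Finset.sum_map]
    simp only [Function.Embedding.coeFn_mk, Finset.prod_singleton]
    rw [Fin.sum_univ_three]
    have hpd : pDoc 3 θ h x = pWord θ h (x 0) * pWord θ h (x 1) * pWord θ h (x 2) := by
      simp [pDoc, Fin.prod_univ_three]
    rw [hpd]
    rw [show pWord θ h (x 0) * pWord θ h (x 1) * pWord θ h (x 2) *
        ((∑ k, h k * δ k (x 0)) / pWord θ h (x 0) + (∑ k, h k * δ k (x 1)) / pWord θ h (x 1)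
          + (∑ k, h k * δ k (x 2)) / pWord θ h (x 2))
      = (∑ k, h k * δ k (x 0)) * (∑ k, h k * θ k (x 1)) * (∑ k, h k * θ k (x 2))
        + (∑ k, h k * θ k (x 0)) * (∑ k, h k * δ k (x 1)) * (∑ k, h k * θ k (x 2))
        + (∑ k, h k * θ k (x 0)) * (∑ k, h k * θ k (x 1)) * (∑ k, h k * δ k (x 2)) from by
        have e0 := (hp (x 0)).ne'
        have e1 := (hp (x 1)).ne'
        have e2 := (hp (x 2)).ne'
        show pWord θ h (x 0) * pWord θ h (x 1) * pWord θ h (x 2) * _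
          = (∑ k, h k * δ k (x 0)) * pWord θ h (x 1) * pWord θ h (x 2)
            + pWord θ h (x 0) * (∑ k, h k * δ k (x 1)) * pWord θ h (x 2)
            + pWord θ h (x 0) * pWord θ h (x 1) * (∑ k, h k * δ k (x 2))
        field_simp]
    rw [triple_prod_sum, triple_prod_sum, triple_prod_sum]
    simp only [mul_add, Finset.sum_add_distrib]
    congr 1
    · congr 1
      · exact Finset.sum_congr rfl fun k _ => Finset.sum_congr rfl fun l _ =>
          Finset.sum_congr rfl fun j _ => by ring
      · exact Finset.sum_congr rfl fun k _ => Finset.sum_congr rfl fun l _ =>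
          Finset.sum_congr rfl fun j _ => by ring
    · exact Finset.sum_congr rfl fun k _ => Finset.sum_congr rfl fun l _ =>
        Finset.sum_congr rfl fun j _ => by ring
  rw [integral_congr_ae hstep]
  rw [integral_finset_sum _ (fun k _ => integrable_finset_sum _ (fun l _ =>
    integrable_finset_sum _ (fun j _ => (integrable_mono3 hν0 k l j).mul_const _)))]
  refine Finset.sum_congr rfl fun k _ => ?_
  rw [integral_finset_sum _ (fun l _ => integrable_finset_sum _ (fun j _ =>
    (integrable_mono3 hν0 k l j).mul_const _))]
  refine Finset.sum_congr rfl fun l _ => ?_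
  rw [integral_finset_sum _ (fun j _ => (integrable_mono3 hν0 k l j).mul_const _)]
  exact Finset.sum_congr rfl fun j _ => integral_mul_const _ _




/-- **Lemma 1 (first-order identifiability under linear independence).**
If `m = 3` and the topic vectors `θ₁,…,θ_K` are linearly independent, then `𝔡_{3,1}(θ) > 0`. -/
theorem first_order_of_linearIndependent
    {V K : ℕ} (hV : 2 ≤ V) (hK : 2 ≤ K) {c0 : ℝ} (hc0 : 0 < c0)
    (ν0 : Measure (Fin K → ℝ)) (hν0 : NiceMixing K ν0)
    (θ : Fin K → Fin V → ℝ) (hθ : θ ∈ Theta c0 V K)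
    (hli : LinearIndependent ℝ θ) :
    0 < degen ν0 3 θ 1 := by
  classical
  obtain ⟨hθlb, hθsum⟩ := hθ
  haveI := hν0.prob
  have h0K : (0:ℕ) < K := by omega
  have h1K : (1:ℕ) < K := by omega
  have h0V : (0:ℕ) < V := by omega
  have h1V : (1:ℕ) < V := by omega
  set i0 : Fin K := ⟨0, h0K⟩ with hi0def
  set i1 : Fin K := ⟨1, h1K⟩ with hi1def
  have hi01 : i0 ≠ i1 := by
    intro hcon
    have := congrArg Fin.val hcon
    simp [hi0def, hi1def] at this
  -- second moments
  have hcc : ∀ k l : Fin K, ∑ j, ∫ h, h k * h l * h j ∂ν0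
      = if k = l then (∫ h, h i0 * h i0 ∂ν0) else (∫ h, h i0 * h i1 ∂ν0) := by
    intro k l
    rw [mdef_sum3 hν0 k l]
    by_cases hkl : k = l
    · subst hkl
      rw [if_pos rfl, m2_perm hν0 (Equiv.swap k i0) k k, Equiv.swap_apply_left]
    · obtain ⟨π, hπ1, hπ2⟩ := exists_perm_pair hkl hi01
      rw [if_neg hkl, m2_perm hν0 π k l, hπ1, hπ2]
  have hb0 : 0 ≤ ∫ h, h i0 * h i1 ∂ν0 := by
    refine integral_nonneg_of_ae ?_
    filter_upwards [ae_simplex hν0] with h hh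
    exact mul_nonneg (hh.1 i0) (hh.1 i1)
  have hba : (∫ h, h i0 * h i1 ∂ν0) < ∫ h, h i0 * h i0 ∂ν0 := by
    have hm := hν0.mom2 i0 i1 hi01
    have hr : (∫ h, h i0 ^ 2 ∂ν0) = ∫ h, h i0 * h i0 ∂ν0 := by
      congr 1; funext h; ring
    rwa [hr] at hm
  -- third moments
  have h3 : 3 ≤ K → ∃ a3 b3 c3 : ℝ, 3 * b3 < a3 + 2 * c3 ∧
      (∀ p, ∫ h, h p * h p * h p ∂ν0 = a3) ∧
      (∀ p s, p ≠ s → ∫ h, h p * h p * h s ∂ν0 = b3) ∧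
      (∀ p s, p ≠ s → ∫ h, h s * h p * h s ∂ν0 = b3) ∧
      (∀ p s, p ≠ s → ∫ h, h p * h s * h s ∂ν0 = b3) ∧
      (∀ k l j, k ≠ l → l ≠ j → k ≠ j → ∫ h, h k * h l * h j ∂ν0 = c3) := by
    intro hK3
    have h2K : (2:ℕ) < K := by omega
    set i2 : Fin K := ⟨2, h2K⟩ with hi2def
    have hi02 : i0 ≠ i2 := by
      intro hcon; have := congrArg Fin.val hcon; simp [hi0def, hi2def] at this
    have hi12 : i1 ≠ i2 := by
      intro hcon; have := congrArg Fin.val hcon; simp [hi1def, hi2def] at this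
    refine ⟨∫ h, h i0 * h i0 * h i0 ∂ν0, ∫ h, h i0 * h i0 * h i1 ∂ν0,
      ∫ h, h i0 * h i1 * h i2 ∂ν0, ?_, ?_, ?_, ?_, ?_, ?_⟩
    · have hm := hν0.mom3 i0 i1 i2 hi01 hi12 hi02
      have hr1 : (∫ h, h i0 ^ 2 * h i1 ∂ν0) = ∫ h, h i0 * h i0 * h i1 ∂ν0 := by
        congr 1; funext h; ring
      have hr2 : (∫ h, h i0 ^ 3 ∂ν0) = ∫ h, h i0 * h i0 * h i0 ∂ν0 := by
        congr 1; funext h; ring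
      rw [hr1, hr2] at hm
      linarith
    · intro p
      rw [mdef_perm hν0 (Equiv.swap p i0) p p p, Equiv.swap_apply_left]
    · intro p s hps
      obtain ⟨π, hπ1, hπ2⟩ := exists_perm_pair hps hi01
      rw [mdef_perm hν0 π p p s, hπ1, hπ2]
    · intro p s hps
      rw [mdef_symm23 s p s]
      obtain ⟨π, hπ1, hπ2⟩ := exists_perm_pair (Ne.symm hps) hi01
      rw [mdef_perm hν0 π s s p, hπ1, hπ2]
    · intro p s hps
      rw [mdef_symm12 p s s, mdef_symm23 s p s]
      obtain ⟨π, hπ1, hπ2⟩ := exists_perm_pair (Ne.symm hps) hi01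
      rw [mdef_perm hν0 π s s p, hπ1, hπ2]
    · intro k l j hkl hlj hkj
      obtain ⟨π, hπ1, hπ2, hπ3⟩ := exists_perm_triple hkl hkj hlj hi01 hi02 hi12
      rw [mdef_perm hν0 π k l j, hπ1, hπ2, hπ3]
  -- the tensor and the objective function
  set Tf : (Fin K → Fin V → ℝ) → Fin V → Fin V → Fin V → ℝ := fun δ va vb vc =>
    ∑ k, ∑ l, ∑ j, (∫ h, h k * h l * h j ∂ν0) *
      (δ k va * θ l vb * θ j vc + θ k va * δ l vb * θ j vc + θ k va * θ l vb * δ j vc)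
    with hTf
  set Φ : (Fin K → Fin V → ℝ) → ℝ :=
    fun δ => ∑ x : Fin 3 → Fin V, |Tf δ (x 0) (x 1) (x 2)| with hΦ
  have hΦapp : ∀ δ, Φ δ = ∑ x : Fin 3 → Fin V, |Tf δ (x 0) (x 1) (x 2)| := fun δ => by
    rw [hΦ]
  set C : Set (Fin K → Fin V → ℝ) :=
    {δ | norm1 δ = 1 ∧ ∀ k, ∑ v, δ k v = 0} with hC
  -- continuity
  have hevc : ∀ (k : Fin K) (v : Fin V), Continuous (fun δ : Fin K → Fin V → ℝ => δ k v) :=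
    fun k v => (continuous_apply v).comp (continuous_apply k)
  have hTcont : ∀ va vb vc, Continuous (fun δ => Tf δ va vb vc) := by
    intro va vb vc
    simp only [hTf]
    refine continuous_finset_sum _ fun k _ => continuous_finset_sum _ fun l _ =>
      continuous_finset_sum _ fun j _ => Continuous.mul continuous_const ?_
    exact ((((hevc k va).mul continuous_const).mul continuous_const).add
      (((continuous_const.mul (hevc l vb)).mul continuous_const))).add
      (continuous_const.mul (hevc j vc))
  have hΦcont : Continuous Φ := by
    simp only [hΦ]
    exact continuous_finset_sum _ fun x _ => (hTcont (x 0) (x 1) (x 2)).abs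
  -- compactness of the constraint set
  have hCclosed : IsClosed C := by
    rw [hC, Set.setOf_and]
    refine IsClosed.inter ?_ ?_
    · refine isClosed_eq ?_ continuous_const
      exact continuous_finset_sum _ fun k _ => continuous_finset_sum _ fun v _ => (hevc k v).abs
    · rw [Set.setOf_forall]
      refine isClosed_iInter fun k => isClosed_eq ?_ continuous_const
      exact continuous_finset_sum _ fun v _ => hevc k v
  have hCsub : C ⊆ Metric.closedBall 0 1 := by
    intro δ hδ
    rw [hC, Set.mem_setOf_eq] at hδ
    obtain ⟨hn, -⟩ := hδ
    have habs : ∀ k v, |δ k v| ≤ 1 := by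
      intro k v
      have h1 : |δ k v| ≤ ∑ v', |δ k v'| :=
        Finset.single_le_sum (f := fun v' => |δ k v'|) (fun _ _ => abs_nonneg _)
          (Finset.mem_univ v)
      have h2 : (∑ v', |δ k v'|) ≤ ∑ k', ∑ v', |δ k' v'| :=
        Finset.single_le_sum (f := fun k' => ∑ v', |δ k' v'|)
          (fun _ _ => Finset.sum_nonneg fun _ _ => abs_nonneg _) (Finset.mem_univ k)
      have h3' : (∑ k', ∑ v', |δ k' v'|) = 1 := hn
      linarith
    rw [Metric.mem_closedBall, dist_zero_right, pi_norm_le_iff_of_nonneg zero_le_one]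
    intro k
    rw [pi_norm_le_iff_of_nonneg zero_le_one]
    intro v
    rw [Real.norm_eq_abs]
    exact habs k v
  have hCcpt : IsCompact C := Metric.isCompact_of_isClosed_isBounded hCclosed
    (Metric.isBounded_closedBall.subset hCsub)
  -- a point of the constraint set
  set w0 : Fin V := ⟨0, h0V⟩ with hw0def
  set w1 : Fin V := ⟨1, h1V⟩ with hw1def
  have hw01 : w0 ≠ w1 := by
    intro hcon; have := congrArg Fin.val hcon; simp [hw0def, hw1def] at this
  set δ0 : Fin K → Fin V → ℝ := fun k v =>
    if k = i0 then (if v = w0 then 1/2 else if v = w1 then -(1/2) else 0) else 0 with hδ0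
  have hrow0 : ∀ k, ∑ v, δ0 k v = 0 := by
    intro k
    by_cases hk : k = i0
    · have hpt : ∀ v : Fin V, δ0 k v
          = (if v = w0 then (1:ℝ)/2 else 0) + (if v = w1 then -(1/2) else 0) := by
        intro v
        simp only [hδ0]
        rw [if_pos hk]
        by_cases hva : v = w0
        · subst hva; simp [hw01]
        · by_cases hvb : v = w1 <;> simp [hva, hvb, Ne.symm hw01] <;> norm_num
      rw [Finset.sum_congr rfl fun v _ => hpt v, Finset.sum_add_distrib,
        Finset.sum_ite_eq', Finset.sum_ite_eq']
      simp
    · simp [hδ0, hk]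
  have hnorm0 : norm1 δ0 = 1 := by
    have hpt : ∀ (k : Fin K) (v : Fin V), |δ0 k v|
        = if k = i0 then ((if v = w0 then (1:ℝ)/2 else 0) + (if v = w1 then 1/2 else 0))
          else 0 := by
      intro k v
      simp only [hδ0]
      by_cases hk : k = i0
      · rw [if_pos hk, if_pos hk]
        by_cases hva : v = w0
        · subst hva; simp [hw01]
        · by_cases hvb : v = w1
          · subst hvb; simp [hva, Ne.symm hw01]
          · simp [hva, hvb]
      · rw [if_neg hk, if_neg hk]
        simp
    show ∑ k, ∑ v, |δ0 k v| = 1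
    rw [Finset.sum_congr rfl fun k _ => Finset.sum_congr rfl fun v _ => hpt k v]
    have hin : ∀ k : Fin K, (∑ v : Fin V, if k = i0 then
        ((if v = w0 then (1:ℝ)/2 else 0) + (if v = w1 then 1/2 else 0)) else 0)
        = if k = i0 then 1 else 0 := by
      intro k
      by_cases hk : k = i0
      · simp only [hk, eq_self_iff_true, if_true]
        rw [Finset.sum_add_distrib, Finset.sum_ite_eq', Finset.sum_ite_eq']
        simp
        norm_num
      · simp [hk]
    rw [Finset.sum_congr rfl fun k _ => hin k, Finset.sum_ite_eq']
    simp
  have hδ0C : δ0 ∈ C := by rw [hC]; exact ⟨hnorm0, hrow0⟩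
  -- minimizer
  obtain ⟨δm, hδmC, hmin⟩ := hCcpt.exists_isMinOn ⟨δ0, hδ0C⟩ hΦcont.continuousOn
  rw [isMinOn_iff] at hmin
  have hδmC' : norm1 δm = 1 ∧ ∀ k, ∑ v, δm k v = 0 := by rw [hC] at hδmC; exact hδmC
  -- positivity of the minimum
  have hεpos : 0 < Φ δm := by
    rw [hΦapp]
    rcases (Finset.sum_nonneg (fun (x : Fin 3 → Fin V) _ => abs_nonneg
        (Tf δm (x 0) (x 1) (x 2)))).lt_or_eq with hlt | heq
    · exact hlt
    · exfalso
      have hTzero : ∀ va vb vc : Fin V, Tf δm va vb vc = 0 := by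
        intro va vb vc
        have hx := (Finset.sum_eq_zero_iff_of_nonneg
          (fun (x : Fin 3 → Fin V) _ => abs_nonneg (Tf δm (x 0) (x 1) (x 2)))).mp heq.symm
          (![va, vb, vc]) (Finset.mem_univ _)
        rw [abs_eq_zero] at hx
        exact hx
      have hδm0 := core_alg hK θ δm hli hθsum hδmC'.2
        (fun k l j => ∫ h, h k * h l * h j ∂ν0)
        (fun va vb vc => by
          have hz := hTzero va vb vc
          simp only [hTf] at hz
          exact hz)
        (∫ h, h i0 * h i0 ∂ν0) (∫ h, h i0 * h i1 ∂ν0) hb0 hba hcc h3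
      have hzero : norm1 δm = 0 := by
        show ∑ k, ∑ v, |δm k v| = 0
        simp [hδm0]
      rw [hδmC'.1] at hzero
      norm_num at hzero
  -- conclusion via the infimum
  unfold degen
  have hSne : Set.Nonempty {r : ℝ | ∃ δ : Fin K → Fin V → ℝ,
      norm1 δ = 1 ∧ (∀ k, ∑ ℓ, δ k ℓ = 0) ∧
      r = ∑ x : Fin 3 → Fin V,
        |∫ h, pDoc 3 θ h x *
          ∑ S ∈ Finset.powersetCard 1 (Finset.univ : Finset (Fin 3)),
            ∏ i ∈ S, ((∑ k, h k * δ k (x i)) / pWord θ h (x i)) ∂ν0|} :=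
    ⟨_, δ0, hnorm0, hrow0, rfl⟩
  refine lt_of_lt_of_le hεpos (le_csInf hSne ?_)
  rintro r ⟨δ, hδn, hδr, rfl⟩
  have hkey : ∀ x : Fin 3 → Fin V,
      (∫ h, pDoc 3 θ h x *
        ∑ S ∈ Finset.powersetCard 1 (Finset.univ : Finset (Fin 3)),
          ∏ i ∈ S, ((∑ k, h k * δ k (x i)) / pWord θ h (x i)) ∂ν0)
      = Tf δ (x 0) (x 1) (x 2) := by
    intro x
    rw [key_integral hc0 hν0 θ hθlb δ x, hTf]
  calc Φ δm ≤ Φ δ := hmin δ (by rw [hC]; exact ⟨hδn, hδr⟩)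
  _ = ∑ x : Fin 3 → Fin V, |Tf δ (x 0) (x 1) (x 2)| := hΦapp δ
  _ = ∑ x : Fin 3 → Fin V,
        |∫ h, pDoc 3 θ h x *
          ∑ S ∈ Finset.powersetCard 1 (Finset.univ : Finset (Fin 3)),
            ∏ i ∈ S, ((∑ k, h k * δ k (x i)) / pWord θ h (x i)) ∂ν0| :=
    Finset.sum_congr rfl fun x _ => by rw [hkey x]

end TopicModel
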